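/- For 0<q<1 and n a nonnegative integer, the two series representations of the monic big q-Jacobi polynomial with a=b=0 agree: d^n q^{n(n-1)/2} · ₂φ₁(q^{-n}, c/x; 0; q, -qx/d) = (-c)^n q^{n(n-1)/2} · ₂φ₁(q^{-n}, -d/x; 0; q, qx/c), for all nonzero x (as an identity of polynomials in x after clearing denominators). -/

import Mathlib

/-- finite q-shifted factorial `(a;q)_k = ∏_{j=0}^{k-1} (1 - a q^j)` -/
noncomputable def qPoch (q a : ℝ) (k : ℕ) : ℝ := ∏ j ∈ Finset.range k, (1 - a * q ^ j)

namespace BigQJ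

/-- triangular numbers -/
def tri (m : ℕ) : ℕ := ∑ i ∈ Finset.range m, i

lemma tri_succ (m : ℕ) : tri (m + 1) = tri m + m := Finset.sum_range_succ _ _

lemma tri_eq (m : ℕ) : tri m = m * (m - 1) / 2 := Finset.sum_range_id m

lemma two_tri (m : ℕ) : 2 * tri m + m = m * m := by
  induction m with
  | zero => simp [tri]
  | succ m ih =>
    rw [tri_succ, show (m+1)*(m+1) = m*m + m + m + 1 by ring]
    linarith [ih]

variable (q : ℝ)

/-- `(q;q)_m` -/
noncomputable def P (m : ℕ) : ℝ := qPoch q q m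

lemma P_zero : P q 0 = 1 := by simp [P, qPoch]

lemma P_succ (m : ℕ) : P q (m + 1) = P q m * (1 - q ^ (m + 1)) := by
  rw [P, P, qPoch, qPoch, Finset.prod_range_succ, ← pow_succ']

lemma qPoch_succ (a : ℝ) (k : ℕ) : qPoch q a (k + 1) = qPoch q a k * (1 - a * q ^ k) :=
  Finset.prod_range_succ _ _

/-- Gaussian binomial coefficient as a ratio of q-factorials -/
noncomputable def B (k j : ℕ) : ℝ := if j ≤ k then P q k / (P q j * P q (k - j)) else 0

variable (hq0 : 0 < q) (hq1 : q < 1)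
include hq0 hq1

lemma P_pos (m : ℕ) : 0 < P q m := by
  induction m with
  | zero => simp [P, qPoch]
  | succ m ih =>
    rw [P_succ]
    have h : q ^ (m+1) < 1 := pow_lt_one₀ hq0.le hq1 (by omega)
    nlinarith

lemma P_ne (m : ℕ) : P q m ≠ 0 := (P_pos q hq0 hq1 m).ne'

lemma B_self (k : ℕ) : B q k k = 1 := by
  rw [B, if_pos le_rfl, Nat.sub_self, P_zero, mul_one, div_self (P_ne q hq0 hq1 k)]

lemma B_zero (k : ℕ) : B q k 0 = 1 := by
  rw [B, if_pos (Nat.zero_le _), Nat.sub_zero, P_zero, one_mul, div_self (P_ne q hq0 hq1 k)]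

lemma pascal (k j : ℕ) (hj : j ≤ k) :
    B q (k + 1) (j + 1) = B q k (j + 1) + q ^ (k - j) * B q k j := by
  rcases eq_or_lt_of_le hj with rfl | hlt
  · rw [B_self q hq0 hq1, B_self q hq0 hq1, B, if_neg (by omega)]
    simp
  · have hj1 : j + 1 ≤ k := hlt
    obtain ⟨s, rfl⟩ := Nat.exists_eq_add_of_le hj1
    rw [B, if_pos (by omega), B, if_pos (by omega), B, if_pos (by omega)]
    rw [show j + 1 + s - (j + 1) = s by omega, show j + 1 + s - j = s + 1 by omega,
      show j + 1 + s + 1 - (j + 1) = s + 1 by omega]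
    rw [P_succ q (j + 1 + s), P_succ q s, P_succ q j]
    have h1 := P_ne q hq0 hq1 j
    have h2 := P_ne q hq0 hq1 s
    have h3 : (1 - q ^ (j+1)) ≠ 0 := by
      have : q ^ (j+1) < 1 := pow_lt_one₀ hq0.le hq1 (by omega)
      intro h; nlinarith
    have h4 : (1 - q ^ (s+1)) ≠ 0 := by
      have : q ^ (s+1) < 1 := pow_lt_one₀ hq0.le hq1 (by omega)
      intro h; nlinarith
    field_simp
    ring

/-- terminating q-binomial theorem -/
lemma qbinom (a : ℝ) (k : ℕ) :
    qPoch q a k = ∑ j ∈ Finset.range (k + 1), B q k j * q ^ (tri j) * (-a) ^ j := by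
  induction k with
  | zero => simp [qPoch, B_zero q hq0 hq1, tri]
  | succ k ih =>
    rw [qPoch_succ, Finset.sum_range_succ' (fun j => B q (k+1) j * q ^ tri j * (-a) ^ j) (k+1)]
    have e1 : ∀ j ∈ Finset.range (k + 1),
        B q (k+1) (j+1) * q ^ tri (j+1) * (-a) ^ (j+1)
        = B q k (j+1) * q ^ tri (j+1) * (-a) ^ (j+1)
          + (-a) * q ^ k * (B q k j * q ^ tri j * (-a) ^ j) := by
      intro j hj
      rw [Finset.mem_range] at hj
      rw [pascal q hq0 hq1 k j (by omega)]
      obtain ⟨s, hs⟩ := Nat.exists_eq_add_of_le (show j ≤ k by omega)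
      rw [show k - j = s by omega, tri_succ, hs]
      ring
    rw [Finset.sum_congr rfl e1, Finset.sum_add_distrib]
    have e2 : ∑ j ∈ Finset.range (k+1), B q k (j+1) * q ^ tri (j+1) * (-a) ^ (j+1)
        = qPoch q a k - 1 := by
      have := Finset.sum_range_succ' (fun j => B q k j * q ^ tri j * (-a) ^ j) (k+1)
      rw [Finset.sum_range_succ] at this
      rw [B, if_neg (by omega)] at this
      simp only [zero_mul, add_zero] at this
      have h0 : B q k 0 * q ^ tri 0 * (-a) ^ 0 = 1 := by
        simp [B_zero q hq0 hq1, tri]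
      rw [← ih] at this
      rw [h0] at this
      linarith [this]
    have e3 : ∑ j ∈ Finset.range (k+1), (-a) * q ^ k * (B q k j * q ^ tri j * (-a) ^ j)
        = (-a) * q ^ k * qPoch q a k := by
      rw [← Finset.mul_sum, ← ih]
    rw [e2, e3]
    have h0 : B q (k+1) 0 * q ^ tri 0 * (-a) ^ 0 = 1 := by
      simp [B_zero q hq0 hq1, tri]
    rw [h0, ih]
    ring

/-- evaluation of `(q^{-n};q)_k` -/
lemma factA (n k : ℕ) (hk : k ≤ n) :
    qPoch q (q ^ (-(n:ℤ))) k * q ^ (n * k)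
    = (-1) ^ k * q ^ tri k * (P q n / P q (n - k)) := by
  induction k with
  | zero =>
    simp [qPoch, tri, div_self (P_ne q hq0 hq1 n)]
  | succ k ih =>
    have hk' : k ≤ n := by omega
    have hq : q ≠ 0 := hq0.ne'
    have hz : (q:ℝ) ^ (-(n:ℤ)) * q ^ n = 1 := by
      rw [← zpow_natCast q n, ← zpow_add₀ hq]
      simp
    rw [qPoch_succ, show n * (k+1) = n * k + n by ring, pow_add,
      show qPoch q (q ^ (-(n:ℤ))) k * (1 - q ^ (-(n:ℤ)) * q ^ k) * (q ^ (n*k) * q ^ n)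
        = (qPoch q (q ^ (-(n:ℤ))) k * q ^ (n*k)) * ((1 - q ^ (-(n:ℤ)) * q ^ k) * q ^ n) by ring,
      ih hk']
    have e1 : (1 - q ^ (-(n:ℤ)) * q ^ k) * q ^ n = -(q ^ k) * (1 - q ^ (n - k)) := by
      have : q ^ k * q ^ (n - k) = q ^ n := by
        rw [← pow_add]; congr 1; omega
      have e2 : q ^ (-(n:ℤ)) * q ^ k * q ^ n = q ^ k := by
        rw [show q ^ (-(n:ℤ)) * q ^ k * q ^ n = (q ^ (-(n:ℤ)) * q ^ n) * q ^ k by ring, hz, one_mul]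
      nlinarith [e2, this]
    rw [e1]
    have e3 : P q (n - k) = P q (n - (k+1)) * (1 - q ^ (n - k)) := by
      rw [show n - k = (n - (k+1)) + 1 by omega, P_succ]
    rw [e3, tri_succ]
    have h1 := P_ne q hq0 hq1 (n - (k+1))
    have h2 : (1 - q ^ (n - k)) ≠ 0 := by
      have : q ^ (n-k) < 1 := pow_lt_one₀ hq0.le hq1 (by omega)
      intro h; nlinarith
    field_simp
    ring

lemma factA2 (n k : ℕ) (hk : k ≤ n) (w : ℝ) :
    qPoch q (q ^ (-(n:ℤ))) k * q ^ (n*k) * (-w) ^ k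
    = q ^ tri k * (P q n / P q (n-k)) * w ^ k := by
  rw [factA q hq0 hq1 n k hk]
  have h2 : (-1:ℝ)^k * (-w)^k = w^k := by rw [← mul_pow, neg_one_mul, neg_neg]
  linear_combination (q ^ tri k * (P q n / P q (n-k))) * h2

omit hq0 hq1 in
lemma frac_combine (u v x d : ℝ) (hx : x ≠ 0) (hd : d ≠ 0) (j a b : ℕ) :
    (u/x)^j * (v*x/d)^(j+a) * d^(j+a+b) = u^j * v^(j+a) * x^a * d^b := by
  rw [div_pow, div_pow, mul_pow, pow_add x j a, pow_add d (j+a) b]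
  field_simp

lemma term_eq (j a b : ℕ) (c d x : ℝ) (hd : d ≠ 0) (hx : x ≠ 0) :
    d ^ (j+a+b) * q ^ tri (j+a+b) *
      (qPoch q (q ^ (-((j+a+b : ℕ) : ℤ))) (j+a) * (B q (j+a) j * q ^ tri j * (-(c/x)) ^ j) / P q (j+a)
        * (-(q*x/d)) ^ (j+a)) * q ^ ((j+a+b)*(j+a+b))
    = B q (j+a+b) (j+a) * B q (j+a) j *
        q ^ (tri (j+a+b) + tri (j+a) + tri j + (j+a) + (j+a+b)*b) * (-c) ^ j * x ^ a * d ^ b := by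
  have hA2 := factA2 q hq0 hq1 (j+a+b) (j+a) (by omega) (q*x/d)
  rw [show (j+a+b) - (j+a) = b by omega] at hA2
  rw [show d ^ (j+a+b) * q ^ tri (j+a+b) *
      (qPoch q (q ^ (-((j+a+b : ℕ) : ℤ))) (j+a) * (B q (j+a) j * q ^ tri j * (-(c/x)) ^ j) / P q (j+a)
        * (-(q*x/d)) ^ (j+a)) * q ^ ((j+a+b)*(j+a+b))
    = (qPoch q (q ^ (-((j+a+b : ℕ) : ℤ))) (j+a) * q ^ ((j+a+b)*(j+a)) * (-(q*x/d)) ^ (j+a)) *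
      (d ^ (j+a+b) * q ^ tri (j+a+b) * (B q (j+a) j * q ^ tri j * (-(c/x)) ^ j) / P q (j+a)
        * q ^ ((j+a+b)*b)) from by ring, hA2]
  simp only [B, if_pos (show j + a ≤ j + a + b by omega), if_pos (show j ≤ j + a by omega)]
  rw [show (j+a+b) - (j+a) = b by omega, show (j+a) - j = a by omega]
  rw [show (-(c/x)) = (-c)/x from by ring]
  have h1 := P_ne q hq0 hq1 (j+a)
  have h2 := P_ne q hq0 hq1 (j+a+b)
  have h3 := P_ne q hq0 hq1 b
  have h4 := P_ne q hq0 hq1 j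
  have hfc := frac_combine (-c) q x d hx hd j a b
  rw [show q ^ tri (j+a) * (P q (j+a+b) / P q b) * (q*x/d) ^ (j+a) *
      (d ^ (j+a+b) * q ^ tri (j+a+b) * (P q (j+a) / (P q j * P q a) * q ^ tri j * (-c/x) ^ j) / P q (j+a)
        * q ^ ((j+a+b)*b))
    = ((-c/x)^j * (q*x/d)^(j+a) * d^(j+a+b)) *
      (q ^ tri (j+a) * (P q (j+a+b) / P q b) *
        (q ^ tri (j+a+b) * (P q (j+a) / (P q j * P q a) * q ^ tri j) / P q (j+a) * q ^ ((j+a+b)*b))) from by ring,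
    hfc]
  field_simp
  ring

/-- expansion of one side into a canonical double sum -/
lemma expandL (n : ℕ) (c d x : ℝ) (hd : d ≠ 0) (hx : x ≠ 0) :
    d ^ n * q ^ tri n *
      (∑ k ∈ Finset.range (n+1),
        qPoch q (q ^ (-(n:ℤ))) k * qPoch q (c/x) k / P q k * (-(q*x/d)) ^ k) * q ^ (n*n)
    = ∑ k ∈ Finset.range (n+1), ∑ j ∈ Finset.range (k+1),
        B q n k * B q k j * q ^ (tri n + tri k + tri j + k + n*(n-k)) * (-c) ^ j * x ^ (k-j)
          * d ^ (n-k) := by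
  rw [Finset.mul_sum, Finset.sum_mul]
  refine Finset.sum_congr rfl fun k hk => ?_
  rw [Finset.mem_range] at hk
  rw [qbinom q hq0 hq1 (c/x) k, Finset.mul_sum, Finset.sum_div, Finset.sum_mul, Finset.mul_sum,
    Finset.sum_mul]
  refine Finset.sum_congr rfl fun j hj => ?_
  rw [Finset.mem_range] at hj
  obtain ⟨a, rfl⟩ := Nat.exists_eq_add_of_le (show j ≤ k by omega)
  obtain ⟨b, rfl⟩ := Nat.exists_eq_add_of_le (show j + a ≤ n by omega)
  rw [show (j+a+b) - (j+a) = b by omega, show (j+a) - j = a by omega]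
  exact term_eq q hq0 hq1 j a b c d x hd hx

/-- the symmetry of the canonical double sum, by reindexing `(k,j) ↦ (n-j, n-k)` -/
lemma swap (n : ℕ) (c d x : ℝ) :
    ∑ k ∈ Finset.range (n+1), ∑ j ∈ Finset.range (k+1),
        B q n k * B q k j * q ^ (tri n + tri k + tri j + k + n*(n-k)) * (-c) ^ j * x ^ (k-j)
          * d ^ (n-k)
    = ∑ k ∈ Finset.range (n+1), ∑ j ∈ Finset.range (k+1),
        B q n k * B q k j * q ^ (tri n + tri k + tri j + k + n*(n-k)) * d ^ j * x ^ (k-j)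
          * (-c) ^ (n-k) := by
  rw [Finset.sum_sigma', Finset.sum_sigma']
  refine Finset.sum_nbij' (fun p => ⟨n - p.2, n - p.1⟩) (fun p => ⟨n - p.2, n - p.1⟩)
    ?_ ?_ ?_ ?_ ?_
  · rintro ⟨k, j⟩ h
    simp only [Finset.mem_sigma, Finset.mem_range] at h ⊢
    omega
  · rintro ⟨k, j⟩ h
    simp only [Finset.mem_sigma, Finset.mem_range] at h ⊢
    omega
  · rintro ⟨k, j⟩ h
    simp only [Finset.mem_sigma, Finset.mem_range] at h
    dsimp only
    rw [show n - (n - k) = k by omega, show n - (n - j) = j by omega]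
  · rintro ⟨k, j⟩ h
    simp only [Finset.mem_sigma, Finset.mem_range] at h
    dsimp only
    rw [show n - (n - k) = k by omega, show n - (n - j) = j by omega]
  · rintro ⟨k, j⟩ h
    simp only [Finset.mem_sigma, Finset.mem_range] at h
    dsimp only
    have hj : j ≤ k := by omega
    have hk : k ≤ n := by omega
    rw [show n - j - (n - k) = k - j by omega, show n - (n - j) = j by omega]
    have hB : B q n (n-j) * B q (n-j) (n-k) = B q n k * B q k j := by
      rw [B, if_pos (by omega : n - j ≤ n), B, if_pos (by omega : n - k ≤ n - j),
        B, if_pos hk, B, if_pos hj,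
        show n - (n - j) = j by omega, show n - j - (n - k) = k - j by omega]
      have h1 := P_ne q hq0 hq1 (n-j)
      have h2 := P_ne q hq0 hq1 (n-k)
      have h3 := P_ne q hq0 hq1 j
      have h4 := P_ne q hq0 hq1 k
      have h5 := P_ne q hq0 hq1 (k-j)
      have h6 := P_ne q hq0 hq1 n
      field_simp
    have hE : tri n + tri (n-j) + tri (n-k) + (n-j) + n*j
        = tri n + tri k + tri j + k + n*(n-k) := by
      obtain ⟨a, rfl⟩ := Nat.exists_eq_add_of_le hj
      obtain ⟨b, rfl⟩ := Nat.exists_eq_add_of_le (show j + a ≤ n by omega)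
      rw [show (j+a+b) - j = a + b by omega, show (j+a+b) - (j+a) = b by omega]
      zify
      have t2 : ((2 * tri (a+b) + (a+b) : ℕ) : ℤ) = ((a+b) * (a+b) : ℕ) := by
        exact_mod_cast congrArg (Nat.cast : ℕ → ℤ) (two_tri (a+b))
      have t3 : ((2 * tri b + b : ℕ) : ℤ) = (b * b : ℕ) := by
        exact_mod_cast congrArg (Nat.cast : ℕ → ℤ) (two_tri b)
      have t4 : ((2 * tri (j+a) + (j+a) : ℕ) : ℤ) = ((j+a) * (j+a) : ℕ) := by
        exact_mod_cast congrArg (Nat.cast : ℕ → ℤ) (two_tri (j+a))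
      have t5 : ((2 * tri j + j : ℕ) : ℤ) = (j * j : ℕ) := by
        exact_mod_cast congrArg (Nat.cast : ℕ → ℤ) (two_tri j)
      push_cast at t2 t3 t4 t5 ⊢
      apply mul_left_cancel₀ (show (2:ℤ) ≠ 0 by norm_num)
      linear_combination t2 + t3 - t4 - t5
    calc B q n k * B q k j * q ^ (tri n + tri k + tri j + k + n*(n-k)) * (-c) ^ j * x ^ (k-j)
          * d ^ (n-k)
        = (B q n k * B q k j) * q ^ (tri n + tri k + tri j + k + n*(n-k)) * d ^ (n-k) * x ^ (k-j)
          * (-c) ^ j := by ring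
      _ = (B q n (n-j) * B q (n-j) (n-k)) * q ^ (tri n + tri (n-j) + tri (n-k) + (n-j) + n*j)
          * d ^ (n-k) * x ^ (k-j) * (-c) ^ j := by rw [hB, hE]
      _ = B q n (n-j) * B q (n-j) (n-k) * q ^ (tri n + tri (n-j) + tri (n-k) + (n-j) + n*j)
          * d ^ (n-k) * x ^ (k-j) * (-c) ^ j := by ring

end BigQJ

open BigQJ in
/-- Agreement of the two series representations of the monic big q-Jacobi
polynomial with `a = b = 0`, for all nonzero `x`. -/
theorem bigqJacobi_two_series_agree (q c d x : ℝ) (hq0 : 0 < q) (hq1 : q < 1)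
    (hc : c ≠ 0) (hd : d ≠ 0) (hx : x ≠ 0) (n : ℕ) :
    d ^ n * q ^ (n * (n - 1) / 2) *
      ∑ k ∈ Finset.range (n + 1),
        qPoch q (q ^ (-(n : ℤ))) k * qPoch q (c / x) k / qPoch q q k * (-(q * x / d)) ^ k
    = (-c) ^ n * q ^ (n * (n - 1) / 2) *
      ∑ k ∈ Finset.range (n + 1),
        qPoch q (q ^ (-(n : ℤ))) k * qPoch q (-(d / x)) k / qPoch q q k * (q * x / c) ^ k := by
  have hqnn : (q:ℝ) ^ (n*n) ≠ 0 := pow_ne_zero _ hq0.ne'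
  apply mul_right_cancel₀ hqnn
  rw [show n * (n - 1) / 2 = tri n from (tri_eq n).symm]
  have hL := expandL q hq0 hq1 n c d x hd hx
  have hR := expandL q hq0 hq1 n (-d) (-c) x (neg_ne_zero.2 hc) hx
  simp only [neg_div, div_neg, neg_neg, P] at hL hR
  rw [hL, hR]
  exact swap q hq0 hq1 n c d x
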